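/- Let n ≥ 1 and let S ⊆ {1, …, ⌊n/2⌋} be a jump set in Z_n. For any vertex v of Circ(n, S): if n is divisible by 3 and n/3 ∈ S, then e(v) ≡ 1 (mod 3); otherwise e(v) ≡ 0 (mod 3). -/

import Mathlib

/-- The circulant graph `Circ(n, S)`: vertices are `ZMod n`, and distinct
vertices `x, y` are adjacent iff `x - y ∈ S ∪ (-S)`. -/
def Circulant (n : ℕ) (S : Set (ZMod n)) : SimpleGraph (ZMod n) where
  Adj x y := x ≠ y ∧ x - y ∈ S ∪ -S
  symm := by
    constructor
    rintro x y ⟨hxy, h⟩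
    refine ⟨hxy.symm, ?_⟩
    have hyx : y - x = -(x - y) := by ring
    rw [hyx]
    rcases h with h | h
    · exact Or.inr (Set.neg_mem_neg.mpr h)
    · exact Or.inl (Set.mem_neg.mp h)
  loopless := ⟨fun x h => h.1 rfl⟩

/-- The number of edges of the subgraph of `G` induced by the open
neighbourhood of the vertex `v` (the quantity `e(v)`). -/
noncomputable def nbhdEdgeCount {V : Type*} (G : SimpleGraph V) (v : V) : ℕ :=
  Nat.card (SimpleGraph.induce (G.neighborSet v) G).edgeSet

lemma three_dvd_card_of_period3 {α : Type*} [DecidableEq α] (f : α → α)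
    (hf : ∀ x, f (f (f x)) = x) :
    ∀ Q : Finset α, (∀ x ∈ Q, f x ∈ Q ∧ f x ≠ x) → 3 ∣ Q.card := by
  have hinj : Function.Injective f :=
    Function.LeftInverse.injective (g := f ∘ f) (fun y => hf y)
  intro Q
  induction Q using Finset.strongInduction with
  | _ Q ih =>
    intro hQ
    rcases Q.eq_empty_or_nonempty with rfl | ⟨x, hx⟩
    · simp
    · obtain ⟨hfx, h1⟩ := hQ x hx
      obtain ⟨hffx, _⟩ := hQ _ hfx
      have h2 : f (f x) ≠ f x := by
        intro h
        have : f (f (f x)) = f (f x) := congrArg f h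
        rw [hf x, h] at this
        exact h1 this.symm
      have h3 : f (f x) ≠ x := by
        intro h
        have : f (f (f x)) = f x := congrArg f h
        rw [hf x] at this
        exact h1 this.symm
      set O : Finset α := {x, f x, f (f x)} with hO
      have hOsub : O ⊆ Q := by
        intro y hy
        simp only [hO, Finset.mem_insert, Finset.mem_singleton] at hy
        rcases hy with rfl | rfl | rfl <;> assumption
      have hOcard : O.card = 3 := by
        rw [hO]
        rw [Finset.card_insert_of_notMem (by simp [h1.symm, h3.symm]),
          Finset.card_insert_of_notMem (by simp [h2.symm])]
        simp
      have hxO : x ∈ O := by simp [hO]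
      have hsub : Q \ O ⊂ Q := Finset.sdiff_ssubset (by simpa using hOsub) ⟨x, hxO⟩
      have hQ' : ∀ y ∈ Q \ O, f y ∈ Q \ O ∧ f y ≠ y := by
        intro y hy
        rw [Finset.mem_sdiff] at hy
        obtain ⟨hyQ, hyO⟩ := hy
        obtain ⟨hfyQ, hfy⟩ := hQ y hyQ
        refine ⟨Finset.mem_sdiff.mpr ⟨hfyQ, ?_⟩, hfy⟩
        intro hfyO
        simp only [hO, Finset.mem_insert, Finset.mem_singleton] at hfyO hyO
        rcases hfyO with h | h | h
        · have : y = f (f x) := by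
            have := congrArg (fun z => f (f z)) h
            rw [hf y] at this
            exact this
          exact hyO (Or.inr (Or.inr this))
        · exact hyO (Or.inl (hinj h))
        · exact hyO (Or.inr (Or.inl (hinj h)))
      have := ih _ hsub hQ'
      have hcard : Q.card = (Q \ O).card + 3 := by
        rw [Finset.card_sdiff_of_subset hOsub, hOcard]
        have := Finset.card_le_card hOsub
        omega
      omega

/-- For any vertex `v` of `Circ(n, S)` with `S` a jump set: if `3 ∣ n` and
`n/3 ∈ S`, then `e(v) ≡ 1 (mod 3)`; otherwise `e(v) ≡ 0 (mod 3)`. -/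
theorem circulant_nbhdEdgeCount_mod_three (n : ℕ) (hn : 1 ≤ n) (S : Set (ZMod n))
    (hS : ∀ s ∈ S, 1 ≤ s.val ∧ s.val ≤ n / 2) (v : ZMod n) :
    (3 ∣ n ∧ ((n / 3 : ℕ) : ZMod n) ∈ S → nbhdEdgeCount (Circulant n S) v % 3 = 1) ∧
    (¬(3 ∣ n ∧ ((n / 3 : ℕ) : ZMod n) ∈ S) → nbhdEdgeCount (Circulant n S) v % 3 = 0) := by
  classical
  haveI : NeZero n := ⟨by omega⟩
  set G := Circulant n S with hG
  set T : Set (ZMod n) := S ∪ -S with hTdef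
  have hTsymm : ∀ a ∈ T, -a ∈ T := by
    intro a ha
    rcases ha with h | h
    · exact Or.inr (Set.neg_mem_neg.mpr h)
    · exact Or.inl (Set.mem_neg.mp h)
  have hT0 : (0 : ZMod n) ∉ T := by
    rintro (h | h)
    · have := (hS 0 h).1
      simp [ZMod.val_zero] at this
    · rw [Set.mem_neg, neg_zero] at h
      have := (hS 0 h).1
      simp [ZMod.val_zero] at this
  have hadj : ∀ x y : ZMod n, G.Adj x y ↔ x - y ∈ T := by
    intro x y
    constructor
    · exact fun h => (show x ≠ y ∧ x - y ∈ T from h).2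
    · intro h
      refine (show x ≠ y ∧ x - y ∈ T from ⟨?_, h⟩)
      intro hxy
      rw [hxy, sub_self] at h
      exact hT0 h
  have hmem : ∀ x : ZMod n, x ∈ G.neighborSet v ↔ x - v ∈ T := by
    intro x
    rw [SimpleGraph.mem_neighborSet, hadj]
    constructor
    · intro h
      simpa [neg_sub] using hTsymm _ h
    · intro h
      simpa [neg_sub] using hTsymm _ h
  set f : ZMod n × ZMod n → ZMod n × ZMod n := fun p => (p.2, -p.1 - p.2) with hfdef
  have hf3 : ∀ p, f (f (f p)) = p := by
    intro p
    simp only [hfdef]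
    ext <;> dsimp <;> ring
  set PF : Finset (ZMod n × ZMod n) :=
    Finset.univ.filter (fun p => p.1 ∈ T ∧ p.2 ∈ T ∧ p.1 + p.2 ∈ T) with hPF
  have hmemPF : ∀ p : ZMod n × ZMod n,
      p ∈ PF ↔ p.1 ∈ T ∧ p.2 ∈ T ∧ p.1 + p.2 ∈ T := by
    intro p
    simp [hPF]
  -- Step A: 2 e(v) = |PF|
  have hA : 2 * nbhdEdgeCount G v = PF.card := by
    haveI : Fintype ↥(G.neighborSet v) := Fintype.ofFinite _
    set G' := SimpleGraph.induce (G.neighborSet v) G with hG'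
    haveI : DecidableRel G'.Adj := fun a b => Classical.propDecidable _
    have h1 : nbhdEdgeCount G v = G'.edgeFinset.card := by
      rw [nbhdEdgeCount, Nat.card_eq_fintype_card, SimpleGraph.edgeFinset_card]
    have h2 : Fintype.card G'.Dart = 2 * G'.edgeFinset.card :=
      SimpleGraph.dart_card_eq_twice_card_edges G'
    have h3 : Fintype.card G'.Dart = PF.card := by
      rw [← Fintype.card_coe PF]
      apply Fintype.card_congr
      refine
        { toFun := fun d => ⟨((d.toProd.1 : ZMod n) - v,
            (d.toProd.2 : ZMod n) - (d.toProd.1 : ZMod n)), by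
              rw [hmemPF]
              have hx := (hmem _).1 d.toProd.1.2
              have hy := (hmem _).1 d.toProd.2.2
              have hxy : (d.toProd.1 : ZMod n) - (d.toProd.2 : ZMod n) ∈ T :=
                (hadj _ _).1 d.adj
              refine ⟨hx, by simpa [neg_sub] using hTsymm _ hxy, ?_⟩
              have heq : ((d.toProd.1 : ZMod n) - v) +
                  ((d.toProd.2 : ZMod n) - (d.toProd.1 : ZMod n)) =
                  (d.toProd.2 : ZMod n) - v := by ring
              dsimp only
              rw [heq]
              exact hy⟩
          invFun := fun p =>
            ⟨(⟨v + p.1.1, by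
                rw [hmem]
                simpa using ((hmemPF p.1).1 p.2).1⟩,
              ⟨v + p.1.1 + p.1.2, by
                rw [hmem]
                have : v + p.1.1 + p.1.2 - v = p.1.1 + p.1.2 := by ring
                rw [this]
                exact ((hmemPF p.1).1 p.2).2.2⟩), by
              show G.Adj (v + p.1.1) (v + p.1.1 + p.1.2)
              rw [hadj]
              have : v + p.1.1 - (v + p.1.1 + p.1.2) = -p.1.2 := by ring
              rw [this]
              exact hTsymm _ ((hmemPF p.1).1 p.2).2.1⟩
          left_inv := by
            rintro ⟨⟨⟨x, hx⟩, ⟨y, hy⟩⟩, hd⟩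
            apply SimpleGraph.Dart.ext
            simp only [Prod.mk.injEq]
            constructor <;> apply Subtype.ext <;> simp only <;> ring
          right_inv := by
            rintro ⟨⟨a, b⟩, hp⟩
            apply Subtype.ext
            simp only [Prod.mk.injEq]
            constructor <;> ring }
    omega
  -- Step B: |PF| ≡ |Fix| mod 3
  set Fix : Finset (ZMod n × ZMod n) := PF.filter (fun p => f p = p) with hFix
  have hB : PF.card % 3 = Fix.card % 3 := by
    have hsplit := Finset.card_filter_add_card_filter_not
      (s := PF) (p := fun p => f p = p)
    have hdvd : 3 ∣ (PF.filter (fun p => ¬ f p = p)).card := by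
      apply three_dvd_card_of_period3 f hf3
      intro p hp
      rw [Finset.mem_filter] at hp
      obtain ⟨hpPF, hpne⟩ := hp
      rw [hmemPF] at hpPF
      obtain ⟨h1, h2, h12⟩ := hpPF
      have hfmem : f p ∈ PF := by
        rw [hmemPF]
        refine ⟨h2, ?_, ?_⟩
        · have := hTsymm _ h12
          simpa [hfdef] using (by
            have : -(p.1 + p.2) = -p.1 - p.2 := by ring
            rw [← this]; exact hTsymm _ h12)
        · have : p.2 + (-p.1 - p.2) = -p.1 := by ring
          rw [hfdef]
          dsimp
          rw [this]
          exact hTsymm _ h1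
      refine ⟨Finset.mem_filter.mpr ⟨hfmem, ?_⟩, hpne⟩
      intro hcontra
      have hinj : Function.Injective f :=
        Function.LeftInverse.injective (g := f ∘ f) (fun y => hf3 y)
      exact hpne (hinj hcontra)
    rw [← hFix] at hsplit
    omega
  -- Step C: compute Fix
  set k : ZMod n := ((n / 3 : ℕ) : ZMod n) with hk
  have hfixmem : ∀ p : ZMod n × ZMod n,
      p ∈ Fix ↔ p.1 ∈ T ∧ p.2 = p.1 ∧ 3 * p.1 = 0 := by
    intro p
    rw [hFix, Finset.mem_filter, hmemPF]
    constructor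
    · rintro ⟨⟨h1, h2, h12⟩, hfp⟩
      have e1 : p.2 = p.1 := congrArg Prod.fst hfp
      have e2 : -p.1 - p.2 = p.2 := congrArg Prod.snd hfp
      exact ⟨h1, e1, by linear_combination -e2 - 2 * e1⟩
    · rintro ⟨h1, e1, e3⟩
      have h2a : p.1 + p.2 = -p.1 := by linear_combination e1 + e3
      refine ⟨⟨h1, e1 ▸ h1, by rw [h2a]; exact hTsymm _ h1⟩, ?_⟩
      have hfp : f p = (p.2, -p.1 - p.2) := rfl
      rw [hfp]
      rw [Prod.ext_iff]
      exact ⟨e1, by linear_combination -2 * e1 - e3⟩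
  have key : ∀ _ : 3 ∣ n,
      (k ∈ T ↔ k ∈ S) ∧ (2 * k ∈ T ↔ k ∈ S) ∧
      (∀ a : ZMod n, 3 * a = 0 → a = 0 ∨ a = k ∨ a = 2 * k) ∧
      3 * k = 0 ∧ k ≠ 2 * k := by
    intro h3n
    have hn3 : 3 ≤ n := by
      rcases h3n with ⟨m, rfl⟩
      omega
    have hkval : k.val = n / 3 := by
      rw [hk]
      exact ZMod.val_cast_of_lt (by omega)
    have h2kcast : (2 : ZMod n) * k = ((2 * (n / 3) : ℕ) : ZMod n) := by
      rw [hk]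
      push_cast
      ring
    have h2kval : (2 * k).val = 2 * (n / 3) := by
      rw [h2kcast]
      exact ZMod.val_cast_of_lt (by omega)
    have hk3 : 3 * k = 0 := by
      have h1 : (3 : ZMod n) * k = ((3 * (n / 3) : ℕ) : ZMod n) := by
        rw [hk]
        push_cast
        ring
      have h2 : 3 * (n / 3) = n := by omega
      rw [h1, h2, ZMod.natCast_self]
    have hkne : k ≠ 2 * k := by
      intro h
      have := congrArg ZMod.val h
      rw [hkval, h2kval] at this
      omega
    have h2kS : 2 * k ∉ S := by
      intro hmem2
      have := (hS _ hmem2).2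
      rw [h2kval] at this
      omega
    have hnegk : -k = 2 * k := by linear_combination -hk3
    have hneg2k : -(2 * k) = k := by linear_combination -hk3
    refine ⟨⟨?_, Or.inl⟩, ⟨?_, fun h => Or.inr ?_⟩, ?_, hk3, hkne⟩
    · rintro (h | h)
      · exact h
      · rw [Set.mem_neg, hnegk] at h
        exact absurd h h2kS
    · rintro (h | h)
      · exact absurd h h2kS
      · rw [Set.mem_neg, hneg2k] at h
        exact h
    · rw [Set.mem_neg, hneg2k]
      exact h
    · intro a ha
      have h1 : ((3 * a.val : ℕ) : ZMod n) = 0 := by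
        push_cast
        rw [ZMod.natCast_zmod_val]
        exact ha
      rw [ZMod.natCast_eq_zero_iff] at h1
      obtain ⟨m3, hm3⟩ := h3n
      obtain ⟨c, hc⟩ := h1
      have hm3pos : 0 < m3 := by omega
      have hav : a.val = m3 * c := by
        have h3c : 3 * a.val = 3 * (m3 * c) := by
          rw [hc, hm3]
          ring
        omega
      have hvlt : a.val < n := ZMod.val_lt a
      have hclt : c < 3 := by
        have hlt : m3 * c < m3 * 3 := by omega
        exact Nat.lt_of_mul_lt_mul_left hlt
      have hacast : a = ((a.val : ℕ) : ZMod n) := (ZMod.natCast_zmod_val a).symm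
      interval_cases c
      · left
        rw [hacast, hav]
        simp
      · right; left
        rw [hacast, hav, hk]
        congr 1
        omega
      · right; right
        rw [hacast, hav, h2kcast]
        congr 1
        omega
  constructor
  · rintro ⟨h3n, hkS⟩
    obtain ⟨hKT, h2KT, h3sol, hk3, hkne⟩ := key h3n
    have hfix2 : Fix.card = 2 := by
      have hFixEq : Fix = {(k, k), (2 * k, 2 * k)} := by
        ext p
        rw [hfixmem]
        simp only [Finset.mem_insert, Finset.mem_singleton]
        constructor
        · rintro ⟨h1, e1, e3⟩
          rcases h3sol p.1 e3 with h0 | hk1 | hk2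
          · exact absurd (h0 ▸ h1) hT0
          · left
            rw [Prod.ext_iff]
            exact ⟨hk1, e1.trans hk1⟩
          · right
            rw [Prod.ext_iff]
            exact ⟨hk2, e1.trans hk2⟩
        · rintro (rfl | rfl)
          · exact ⟨hKT.2 hkS, rfl, hk3⟩
          · exact ⟨h2KT.2 hkS, rfl, by linear_combination 2 * hk3⟩
      rw [hFixEq]
      rw [Finset.card_insert_of_notMem
        (fun h => hkne (congrArg Prod.fst (Finset.mem_singleton.mp h))),
        Finset.card_singleton]
    rw [hG] at hA ⊢
    omega
  · intro hc
    have hfix0 : Fix.card = 0 := by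
      rw [Finset.card_eq_zero, Finset.eq_empty_iff_forall_notMem]
      intro p hp
      rw [hfixmem] at hp
      obtain ⟨h1, e1, e3⟩ := hp
      by_cases h3n : 3 ∣ n
      · have hkS : k ∉ S := fun h => hc ⟨h3n, h⟩
        obtain ⟨hKT, h2KT, h3sol, hk3, hkne⟩ := key h3n
        rcases h3sol p.1 e3 with h0 | hk1 | hk2
        · exact hT0 (h0 ▸ h1)
        · exact hkS (hKT.1 (hk1 ▸ h1))
        · exact hkS (h2KT.1 (hk2 ▸ h1))
      · have h10 : ((3 * p.1.val : ℕ) : ZMod n) = 0 := by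
          push_cast
          rw [ZMod.natCast_zmod_val]
          exact e3
        rw [ZMod.natCast_eq_zero_iff] at h10
        have hcop : Nat.Coprime 3 n :=
          (Nat.Prime.coprime_iff_not_dvd Nat.prime_three).mpr h3n
        have hdvd : n ∣ p.1.val := by
          exact Nat.Coprime.dvd_of_dvd_mul_left hcop.symm h10
        have hval0 : p.1.val = 0 := Nat.eq_zero_of_dvd_of_lt hdvd (ZMod.val_lt p.1)
        have hp10 : p.1 = 0 := (ZMod.val_eq_zero _).mp hval0
        exact hT0 (hp10 ▸ h1)
    rw [hG] at hA ⊢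
    omega
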